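/- Every state s on the hypergraph H₃(18) — atoms {1,...,18} with blocks {1,2,3}, {1,4,5}, {1,6,7}, {2,8,9}, {2,10,11}, {3,12,13}, {3,14,15}, {4,8,12}, {4,14,16}, {5,10,13}, {5,17,18}, {6,11,12}, {6,16,18}, {7,9,17}, {7,10,15}, {8,15,18}, {9,13,16}, {11,14,17} — is determined by x = s(17) and y = s(18): s equals x on atoms 2,4,6,13,15; equals y on atoms 1,9,10,12,14; and equals 1−x−y on atoms 3,5,7,8,11,16. The state space is affinely isomorphic to the triangle {(x,y) : x ≥ 0, y ≥ 0, x+y ≤ 1}, and hence has exactly 3 extreme points. -/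

import Mathlib

/-- The 18 blocks of the hypergraph H₃(18) on atoms {1,...,18}. -/
def H3Blocks : Finset (Finset ℕ) :=
  { {1,2,3}, {1,4,5}, {1,6,7}, {2,8,9}, {2,10,11}, {3,12,13}, {3,14,15},
    {4,8,12}, {4,14,16}, {5,10,13}, {5,17,18}, {6,11,12}, {6,16,18},
    {7,9,17}, {7,10,15}, {8,15,18}, {9,13,16}, {11,14,17} }

/-- A state on H₃(18): nonnegative on the atoms, summing to 1 on every block. -/
def H3IsState (s : ℕ → ℝ) : Prop :=
  (∀ a ∈ Finset.Icc 1 18, 0 ≤ s a) ∧ ∀ b ∈ H3Blocks, ∑ a ∈ b, s a = 1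

/-- The state of H₃(18) with parameters `x = s 17`, `y = s 18`: value `x` on atoms
2,4,6,13,15,17; value `y` on atoms 1,9,10,12,14,18; value `1-x-y` on atoms
3,5,7,8,11,16. -/
noncomputable def H3StateOf (x y : ℝ) : ℕ → ℝ := fun a =>
  if a ∈ ({2,4,6,13,15,17} : Finset ℕ) then x
  else if a ∈ ({1,9,10,12,14,18} : Finset ℕ) then y
  else 1 - x - y

/-- The triangle {(x,y) : x ≥ 0, y ≥ 0, x + y ≤ 1}. -/
def H3Triangle : Set (ℝ × ℝ) := {p | 0 ≤ p.1 ∧ 0 ≤ p.2 ∧ p.1 + p.2 ≤ 1}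

lemma H3_vertex_extreme_00 : ((0,0) : ℝ × ℝ) ∈ Set.extremePoints ℝ H3Triangle := by
  refine ⟨⟨le_refl _, le_refl _, by norm_num⟩, ?_⟩
  rintro ⟨a1,a2⟩ ⟨ha1,ha2,ha3⟩ ⟨b1,b2⟩ ⟨hb1,hb2,hb3⟩ ⟨t,u,ht,hu,htu,heq⟩
  simp only [Prod.smul_mk, Prod.mk_add_mk, Prod.mk.injEq, smul_eq_mul] at heq
  obtain ⟨h1, h2⟩ := heq
  simp only [Prod.mk.injEq]
  constructor <;> nlinarith

lemma H3_vertex_extreme_10 : ((1,0) : ℝ × ℝ) ∈ Set.extremePoints ℝ H3Triangle := by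
  refine ⟨⟨by norm_num, le_refl _, by norm_num⟩, ?_⟩
  rintro ⟨a1,a2⟩ ⟨ha1,ha2,ha3⟩ ⟨b1,b2⟩ ⟨hb1,hb2,hb3⟩ ⟨t,u,ht,hu,htu,heq⟩
  simp only [Prod.smul_mk, Prod.mk_add_mk, Prod.mk.injEq, smul_eq_mul] at heq
  obtain ⟨h1, h2⟩ := heq
  have hA2 : a2 = 0 := by nlinarith
  have hB2 : b2 = 0 := by nlinarith
  have hA1 : a1 = 1 := by nlinarith
  have hB1 : b1 = 1 := by nlinarith
  simp [hA1, hA2, hB1, hB2]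

lemma H3_vertex_extreme_01 : ((0,1) : ℝ × ℝ) ∈ Set.extremePoints ℝ H3Triangle := by
  refine ⟨⟨le_refl _, by norm_num, by norm_num⟩, ?_⟩
  rintro ⟨a1,a2⟩ ⟨ha1,ha2,ha3⟩ ⟨b1,b2⟩ ⟨hb1,hb2,hb3⟩ ⟨t,u,ht,hu,htu,heq⟩
  simp only [Prod.smul_mk, Prod.mk_add_mk, Prod.mk.injEq, smul_eq_mul] at heq
  obtain ⟨h1, h2⟩ := heq
  have hA1 : a1 = 0 := by nlinarith
  have hB1 : b1 = 0 := by nlinarith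
  have hA2 : a2 = 1 := by nlinarith
  have hB2 : b2 = 1 := by nlinarith
  simp [hA1, hA2, hB1, hB2]

lemma H3_extreme_sub (p : ℝ × ℝ) (hp : p ∈ Set.extremePoints ℝ H3Triangle) :
    p = (0,0) ∨ p = (1,0) ∨ p = (0,1) := by
  obtain ⟨⟨h1, h2, h3⟩, hext⟩ := hp
  by_contra hcon
  push_neg at hcon
  obtain ⟨hne00, hne10, hne01⟩ := hcon
  have hp' : p = (p.1, p.2) := rfl
  have key : ∃ d : ℝ × ℝ, d ≠ 0 ∧ p + d ∈ H3Triangle ∧ p - d ∈ H3Triangle := by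
    rcases eq_or_lt_of_le h1 with hx0 | hx0
    · have hy : 0 < p.2 := by
        rcases eq_or_lt_of_le h2 with hy0 | hy0
        · exact absurd (by rw [hp', ← hx0, ← hy0]) hne00
        · exact hy0
      have hy1 : p.2 < 1 := by
        rcases eq_or_lt_of_le h3 with hs | hs
        · exact absurd (by rw [hp', ← hx0]; norm_num; linarith) hne01
        · linarith
      set e := min p.2 (1 - p.2) / 2 with he
      have he1 : e ≤ p.2 / 2 := by linarith [min_le_left p.2 (1-p.2)]
      have he2 : e ≤ (1 - p.2) / 2 := by linarith [min_le_right p.2 (1-p.2)]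
      have hepos : 0 < e := by have := lt_min hy (by linarith : (0:ℝ) < 1 - p.2); positivity
      refine ⟨(0, e), ?_, ?_, ?_⟩
      · simp [Prod.ext_iff]; linarith
      · exact ⟨by simp; linarith, by simp; linarith, by simp; linarith⟩
      · exact ⟨by simp; linarith, by simp; linarith, by simp; linarith⟩
    · rcases eq_or_lt_of_le h2 with hy0 | hy0
      · have hx1 : p.1 < 1 := by
          rcases eq_or_lt_of_le h3 with hs | hs
          · exact absurd (by rw [hp', ← hy0]; norm_num; linarith) hne10
          · linarith
        set e := min p.1 (1 - p.1) / 2 with he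
        have he1 : e ≤ p.1 / 2 := by linarith [min_le_left p.1 (1-p.1)]
        have he2 : e ≤ (1 - p.1) / 2 := by linarith [min_le_right p.1 (1-p.1)]
        have hepos : 0 < e := by have := lt_min hx0 (by linarith : (0:ℝ) < 1 - p.1); positivity
        refine ⟨(e, 0), ?_, ?_, ?_⟩
        · simp [Prod.ext_iff]; linarith
        · exact ⟨by simp; linarith, by simp; linarith, by simp; linarith⟩
        · exact ⟨by simp; linarith, by simp; linarith, by simp; linarith⟩
      · set e := min p.1 p.2 / 2 with he
        have he1 : e ≤ p.1 / 2 := by linarith [min_le_left p.1 p.2]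
        have he2 : e ≤ p.2 / 2 := by linarith [min_le_right p.1 p.2]
        have hepos : 0 < e := by have := lt_min hx0 hy0; positivity
        refine ⟨(e, -e), ?_, ?_, ?_⟩
        · simp [Prod.ext_iff]; intro h; linarith
        · exact ⟨by simp; linarith, by simp; linarith, by simp; linarith⟩
        · exact ⟨by simp; linarith, by simp; linarith, by simp; linarith⟩
  obtain ⟨d, hd, hpd, hmd⟩ := key
  have hmem : p ∈ openSegment ℝ (p + d) (p - d) := by
    refine ⟨1/2, 1/2, by norm_num, by norm_num, by norm_num, ?_⟩
    ext <;> simp <;> ring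
  have h := hext hpd hmd hmem
  apply hd
  simpa using congrArg (· - p) h

set_option maxHeartbeats 4000000 in
/-- Every state on H₃(18) is determined by `(x, y) = (s 17, s 18)` via `H3StateOf`,
the parameters ranging exactly over the triangle {x ≥ 0, y ≥ 0, x+y ≤ 1}; hence the
state space is affinely isomorphic to this triangle, whose extreme points are exactly
the 3 vertices (0,0), (1,0), (0,1). -/
theorem H3_state_space :
    (∀ s : ℕ → ℝ, H3IsState s →
      (s 17, s 18) ∈ H3Triangle ∧ ∀ a ∈ Finset.Icc 1 18, s a = H3StateOf (s 17) (s 18) a) ∧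
    (∀ p ∈ H3Triangle, H3IsState (H3StateOf p.1 p.2)) ∧
    Set.extremePoints ℝ H3Triangle = {(0,0), (1,0), (0,1)} := by
  refine ⟨?_, ?_, ?_⟩
  · intro s hs
    obtain ⟨hn, hb⟩ := hs
    have e1 := hb {1,2,3} (by decide)
    have e2 := hb {1,4,5} (by decide)
    have e3 := hb {1,6,7} (by decide)
    have e4 := hb {2,8,9} (by decide)
    have e5 := hb {2,10,11} (by decide)
    have e6 := hb {3,12,13} (by decide)
    have e7 := hb {3,14,15} (by decide)
    have e8 := hb {4,8,12} (by decide)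
    have e9 := hb {4,14,16} (by decide)
    have e10 := hb {5,10,13} (by decide)
    have e11 := hb {5,17,18} (by decide)
    have e12 := hb {6,11,12} (by decide)
    have e13 := hb {6,16,18} (by decide)
    have e14 := hb {7,9,17} (by decide)
    have e15 := hb {7,10,15} (by decide)
    have e16 := hb {8,15,18} (by decide)
    have e17 := hb {9,13,16} (by decide)
    have e18 := hb {11,14,17} (by decide)
    simp [Finset.sum_insert, Finset.mem_insert] at e1 e2 e3 e4 e5 e6 e7 e8 e9 e10 e11 e12 e13 e14 e15 e16 e17 e18
    constructor
    · exact ⟨hn 17 (by decide), hn 18 (by decide),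
        by linarith [hn 5 (by decide : 5 ∈ Finset.Icc 1 18)]⟩
    · intro a ha
      rw [Finset.mem_Icc] at ha
      obtain ⟨ha1, ha2⟩ := ha
      interval_cases a <;> simp [H3StateOf] <;>
        linarith [e1,e2,e3,e4,e5,e6,e7,e8,e9,e10,e11,e12,e13,e14,e15,e16,e17,e18]
  · rintro ⟨x, y⟩ ⟨hx, hy, hxy⟩
    constructor
    · intro a ha
      rw [Finset.mem_Icc] at ha
      obtain ⟨ha1, ha2⟩ := ha
      interval_cases a <;> simp [H3StateOf] <;> linarith
    · intro b hbmem
      simp only [H3Blocks, Finset.mem_insert, Finset.mem_singleton] at hbmem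
      rcases hbmem with rfl|rfl|rfl|rfl|rfl|rfl|rfl|rfl|rfl|rfl|rfl|rfl|rfl|rfl|rfl|rfl|rfl|rfl <;>
        · simp [Finset.sum_insert, Finset.mem_insert, H3StateOf]
          try ring
  · ext p
    constructor
    · intro hp
      rcases H3_extreme_sub p hp with h | h | h <;> simp [h]
    · intro hp
      rcases hp with h | h | h <;> subst h
      exacts [H3_vertex_extreme_00, H3_vertex_extreme_10, H3_vertex_extreme_01]
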